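/- Let g, a be random variables and x = (x_1,...,x_T) a finite sequence of random variables generated sequentially. Suppose g and a are deterministic functions of x (so that I(g; a | x_1,...,x_T) = 0), and suppose that x_0 is a deterministic constant (so I(g; a | x_{<1}) = I(g; a)). If for every step t ≥ 1, either I(g; x_t | x_{<t}) = 0 or I(a; x_t | x_{<t}) = 0 holds, then I(g; a) = 0. -/

import Mathlib

open scoped BigOperators

/-- Probability of the event `X = x` under the weight function `p` on a finite sample space. -/
noncomputable def pr {Ω α : Type*} [Fintype Ω] [DecidableEq α] (p : Ω → ℝ) (X : Ω → α) (x : α) : ℝ :=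
  ∑ ω, if X ω = x then p ω else 0

/-- Shannon entropy of a discrete random variable `X` with finite support. -/
noncomputable def ent {Ω α : Type*} [Fintype Ω] [Fintype α] [DecidableEq α]
    (p : Ω → ℝ) (X : Ω → α) : ℝ :=
  -∑ x, pr p X x * Real.log (pr p X x)

/-- Conditional entropy `H(X | Y) = H(X, Y) - H(Y)`. -/
noncomputable def condEnt {Ω α β : Type*} [Fintype Ω] [Fintype α] [Fintype β]
    [DecidableEq α] [DecidableEq β] (p : Ω → ℝ) (X : Ω → α) (Y : Ω → β) : ℝ :=
  ent p (fun ω => (X ω, Y ω)) - ent p Y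

/-- Mutual information `I(X; Y) = H(X) + H(Y) - H(X, Y)`. -/
noncomputable def mi {Ω α β : Type*} [Fintype Ω] [Fintype α] [Fintype β]
    [DecidableEq α] [DecidableEq β] (p : Ω → ℝ) (X : Ω → α) (Y : Ω → β) : ℝ :=
  ent p X + ent p Y - ent p (fun ω => (X ω, Y ω))

/-- Conditional mutual information
`I(X; Y | Z) = H(X, Z) + H(Y, Z) - H(X, Y, Z) - H(Z)`. -/
noncomputable def cmi {Ω α β γ : Type*} [Fintype Ω] [Fintype α] [Fintype β] [Fintype γ]
    [DecidableEq α] [DecidableEq β] [DecidableEq γ]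
    (p : Ω → ℝ) (X : Ω → α) (Y : Ω → β) (Z : Ω → γ) : ℝ :=
  ent p (fun ω => (X ω, Z ω)) + ent p (fun ω => (Y ω, Z ω))
    - ent p (fun ω => ((X ω, Y ω), Z ω)) - ent p Z

/-- Variation of information `VI(X, Y) = H(X) + H(Y) - 2 I(X; Y)`. -/
noncomputable def VI {Ω α β : Type*} [Fintype Ω] [Fintype α] [Fintype β]
    [DecidableEq α] [DecidableEq β] (p : Ω → ℝ) (X : Ω → α) (Y : Ω → β) : ℝ :=
  ent p X + ent p Y - 2 * mi p X Y

/-- Prefix random vector `(x_1, ..., x_t)` of a sequence of random variables. -/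
def pref {Ω α : Type*} (x : ℕ → Ω → α) (t : ℕ) : Ω → (Fin t → α) :=
  fun ω i => x (i + 1) ω


section MyAux
set_option linter.unusedSectionVars false
open Real
section A1
variable {Ω α α' β γ δ : Type*} [Fintype Ω]

variable {Ω α α' β γ δ : Type*} [Fintype Ω]

lemma my_pr_nonneg [DecidableEq α] (p : Ω → ℝ) (hp : ∀ ω, 0 ≤ p ω) (X : Ω → α) (x : α) :
    0 ≤ pr p X x := by
  unfold pr
  exact Finset.sum_nonneg fun ω _ => by split; exacts [hp ω, le_refl 0]

lemma my_ent_congr [Fintype α] [Fintype α'] [DecidableEq α] [DecidableEq α']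
    (p : Ω → ℝ) (X : Ω → α) (Y : Ω → α') (f : α → α') (hf : Function.Injective f)
    (h : ∀ ω, Y ω = f (X ω)) : ent p Y = ent p X := by
  have hY : Y = fun ω => f (X ω) := funext h
  subst hY
  unfold ent
  congr 1
  have h0 : ∀ y ∈ Finset.univ, y ∉ Finset.univ.image f →
      pr p (fun ω => f (X ω)) y * Real.log (pr p (fun ω => f (X ω)) y) = 0 := by
    intro y _ hy
    have : pr p (fun ω => f (X ω)) y = 0 := by
      unfold pr
      refine Finset.sum_eq_zero fun ω _ => ?_
      have : f (X ω) ≠ y := fun hc => hy (Finset.mem_image.2 ⟨X ω, Finset.mem_univ _, hc⟩)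
      simp [this]
    simp [this]
  rw [← Finset.sum_subset (Finset.subset_univ (Finset.univ.image f)) h0,
    Finset.sum_image (fun x _ x' _ hxx => hf hxx)]
  refine Finset.sum_congr rfl fun x _ => ?_
  have : pr p (fun ω => f (X ω)) (f x) = pr p X x := by
    unfold pr
    exact Finset.sum_congr rfl fun ω _ => by simp [hf.eq_iff]
  rw [this]


end A1
section A2
variable {Ω α β γ : Type*} [Fintype Ω] [Fintype α] [Fintype β] [Fintype γ]
  [DecidableEq α] [DecidableEq β] [DecidableEq γ]
  [DecidableEq α] [DecidableEq β] [DecidableEq γ]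

lemma my_pr_marg13 (p : Ω → ℝ) (X : Ω → α) (Y : Ω → β) (Z : Ω → γ) (x : α) (z : γ) :
    pr p (fun ω => (X ω, Z ω)) (x, z) = ∑ y, pr p (fun ω => ((X ω, Y ω), Z ω)) ((x, y), z) := by
  unfold pr
  rw [Finset.sum_comm]
  refine Finset.sum_congr rfl fun ω _ => ?_
  by_cases h1 : X ω = x <;> by_cases h2 : Z ω = z <;>
    simp [h1, h2, Prod.ext_iff, Finset.sum_ite_eq]

lemma my_pr_marg23 (p : Ω → ℝ) (X : Ω → α) (Y : Ω → β) (Z : Ω → γ) (y : β) (z : γ) :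
    pr p (fun ω => (Y ω, Z ω)) (y, z) = ∑ x, pr p (fun ω => ((X ω, Y ω), Z ω)) ((x, y), z) := by
  unfold pr
  rw [Finset.sum_comm]
  refine Finset.sum_congr rfl fun ω _ => ?_
  by_cases h1 : Y ω = y <;> by_cases h2 : Z ω = z <;>
    simp [h1, h2, Prod.ext_iff, Finset.sum_ite_eq]

lemma my_sum_rot (f : α → β → Ω → ℝ) :
    ∑ x, ∑ y, ∑ ω, f x y ω = ∑ ω, ∑ x, ∑ y, f x y ω := by
  rw [show (∑ x, ∑ y, ∑ ω, f x y ω) = ∑ x, ∑ ω, ∑ y, f x y ω from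
    Finset.sum_congr rfl fun x _ => Finset.sum_comm]
  exact Finset.sum_comm

lemma my_pr_marg3 (p : Ω → ℝ) (X : Ω → α) (Y : Ω → β) (Z : Ω → γ) (z : γ) :
    pr p Z z = ∑ x, ∑ y, pr p (fun ω => ((X ω, Y ω), Z ω)) ((x, y), z) := by
  unfold pr
  rw [my_sum_rot]
  refine Finset.sum_congr rfl fun ω _ => ?_
  by_cases h2 : Z ω = z <;> simp [h2, Prod.ext_iff, ite_and, Finset.sum_ite_eq]


end A2
section A3
variable {α β γ : Type*} [Fintype α] [Fintype β] [Fintype γ]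


lemma my_pt (q a b c : ℝ) (hq : 0 ≤ q) (ha : q ≤ a) (hb : q ≤ b) (hc : q ≤ c) :
    q * log a + q * log b - q * log q - q * log c ≤ a * b / c - q := by
  rcases eq_or_lt_of_le hq with h0 | h0
  · rw [← h0]
    simp only [zero_mul, sub_zero, add_zero, zero_add, sub_zero]
    have : 0 ≤ a * b / c := div_nonneg (mul_nonneg (h0 ▸ ha) (h0 ▸ hb)) (h0 ▸ hc)
    linarith
  · have hA : 0 < a := lt_of_lt_of_le h0 ha
    have hB : 0 < b := lt_of_lt_of_le h0 hb
    have hC : 0 < c := lt_of_lt_of_le h0 hc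
    have hkey : log a + log b - log q - log c = log (a * b / (q * c)) := by
      rw [Real.log_div (by positivity) (by positivity), Real.log_mul hA.ne' hB.ne',
        Real.log_mul h0.ne' hC.ne']
      ring
    have hle : log (a * b / (q * c)) ≤ a * b / (q * c) - 1 :=
      Real.log_le_sub_one_of_pos (by positivity)
    have : q * (log a + log b - log q - log c) ≤ q * (a * b / (q * c) - 1) := by
      apply mul_le_mul_of_nonneg_left _ hq
      rw [hkey]; exact hle
    have heq : q * (a * b / (q * c) - 1) = a * b / c - q := by
      field_simp
    nlinarith [this, heq]

lemma my_key_ineq (q : α → β → γ → ℝ) (hq : ∀ x y z, 0 ≤ q x y z) :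
    ∑ x, ∑ z, (∑ y, q x y z) * Real.log (∑ y, q x y z)
      + ∑ y, ∑ z, (∑ x, q x y z) * Real.log (∑ x, q x y z)
    ≤ (∑ x, ∑ y, ∑ z, q x y z * Real.log (q x y z))
      + ∑ z, (∑ x, ∑ y, q x y z) * Real.log (∑ x, ∑ y, q x y z) := by
  set m13 : α → γ → ℝ := fun x z => ∑ y, q x y z with hm13
  set m23 : β → γ → ℝ := fun y z => ∑ x, q x y z with hm23
  set m3 : γ → ℝ := fun z => ∑ x, ∑ y, q x y z with hm3
  -- rewrite marginal entropy sums as triple sums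
  have hA : ∑ x, ∑ z, m13 x z * Real.log (m13 x z)
      = ∑ x, ∑ y, ∑ z, q x y z * Real.log (m13 x z) := by
    refine Finset.sum_congr rfl fun x _ => ?_
    calc ∑ z, m13 x z * Real.log (m13 x z)
        = ∑ z, ∑ y, q x y z * Real.log (m13 x z) :=
          Finset.sum_congr rfl fun z _ => Finset.sum_mul _ _ _
      _ = ∑ y, ∑ z, q x y z * Real.log (m13 x z) := Finset.sum_comm
  have hB : ∑ y, ∑ z, m23 y z * Real.log (m23 y z)
      = ∑ x, ∑ y, ∑ z, q x y z * Real.log (m23 y z) := by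
    calc ∑ y, ∑ z, m23 y z * Real.log (m23 y z)
        = ∑ y, ∑ x, ∑ z, q x y z * Real.log (m23 y z) := by
          refine Finset.sum_congr rfl fun y _ => ?_
          calc ∑ z, m23 y z * Real.log (m23 y z)
              = ∑ z, ∑ x, q x y z * Real.log (m23 y z) :=
                Finset.sum_congr rfl fun z _ => Finset.sum_mul _ _ _
            _ = ∑ x, ∑ z, q x y z * Real.log (m23 y z) := Finset.sum_comm
      _ = ∑ x, ∑ y, ∑ z, q x y z * Real.log (m23 y z) := Finset.sum_comm
  have hC : ∑ z, m3 z * Real.log (m3 z)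
      = ∑ x, ∑ y, ∑ z, q x y z * Real.log (m3 z) := by
    rw [show (∑ x, ∑ y, ∑ z, q x y z * Real.log (m3 z))
        = ∑ z, ∑ x, ∑ y, q x y z * Real.log (m3 z) by
      rw [show (∑ x, ∑ y, ∑ z, q x y z * Real.log (m3 z))
          = ∑ x, ∑ z, ∑ y, q x y z * Real.log (m3 z) from
        Finset.sum_congr rfl fun x _ => Finset.sum_comm]
      exact Finset.sum_comm]
    refine Finset.sum_congr rfl fun z _ => ?_
    rw [Finset.sum_mul]
    exact Finset.sum_congr rfl fun x _ => Finset.sum_mul _ _ _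
  rw [hA, hB, hC]
  -- pointwise bound
  have hpw : ∀ x y z, q x y z * Real.log (m13 x z) + q x y z * Real.log (m23 y z)
      - q x y z * Real.log (q x y z) - q x y z * Real.log (m3 z)
      ≤ m13 x z * m23 y z / m3 z - q x y z := by
    intro x y z
    refine my_pt (q x y z) _ _ _ (hq x y z) ?_ ?_ ?_
    · exact Finset.single_le_sum (fun y _ => hq x y z) (Finset.mem_univ y)
    · exact Finset.single_le_sum (fun x _ => hq x y z) (Finset.mem_univ x)
    · calc q x y z ≤ m13 x z := Finset.single_le_sum (fun y _ => hq x y z) (Finset.mem_univ y)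
        _ ≤ m3 z := Finset.single_le_sum (fun x _ => Finset.sum_nonneg fun y _ => hq x y z)
            (Finset.mem_univ x)
  -- sum of the bound is ≤ 0
  have hsumbound : ∑ x, ∑ y, ∑ z, (m13 x z * m23 y z / m3 z - q x y z) ≤ 0 := by
    have h1 : ∑ x, ∑ y, ∑ z, m13 x z * m23 y z / m3 z ≤ ∑ z, m3 z := by
      have hrot : ∑ x, ∑ y, ∑ z, m13 x z * m23 y z / m3 z
          = ∑ z, ∑ x, ∑ y, m13 x z * m23 y z / m3 z := by
        rw [show (∑ x, ∑ y, ∑ z, m13 x z * m23 y z / m3 z)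
            = ∑ x, ∑ z, ∑ y, m13 x z * m23 y z / m3 z from
          Finset.sum_congr rfl fun x _ => Finset.sum_comm]
        exact Finset.sum_comm
      rw [hrot]
      refine Finset.sum_le_sum fun z _ => ?_
      have : ∑ x, ∑ y, m13 x z * m23 y z / m3 z = m3 z * m3 z / m3 z := by
        have e1 : (∑ x, m13 x z) = m3 z := rfl
        have e2 : (∑ y, m23 y z) = m3 z := Finset.sum_comm
        calc ∑ x, ∑ y, m13 x z * m23 y z / m3 z
            = ∑ x, (m13 x z * ∑ y, m23 y z) / m3 z := by
              refine Finset.sum_congr rfl fun x _ => ?_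
              rw [Finset.mul_sum, Finset.sum_div]
          _ = (∑ x, m13 x z * ∑ y, m23 y z) / m3 z := (Finset.sum_div _ _ _).symm
          _ = ((∑ x, m13 x z) * ∑ y, m23 y z) / m3 z := by rw [Finset.sum_mul]
          _ = m3 z * m3 z / m3 z := by rw [e1, e2]
      rw [this]
      rcases eq_or_ne (m3 z) 0 with h | h
      · simp [h]
      · rw [mul_div_assoc, div_self h, mul_one]
    have h2 : ∑ x, ∑ y, ∑ z, q x y z = ∑ z, m3 z := by
      rw [show (∑ x, ∑ y, ∑ z, q x y z) = ∑ x, ∑ z, ∑ y, q x y z from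
        Finset.sum_congr rfl fun x _ => Finset.sum_comm]
      exact Finset.sum_comm
    have := sub_nonpos.2 h1
    simp only [Finset.sum_sub_distrib]
    rw [h2]
    linarith
  -- combine
  have hfinal : ∑ x, ∑ y, ∑ z,
      (q x y z * Real.log (m13 x z) + q x y z * Real.log (m23 y z)
        - q x y z * Real.log (q x y z) - q x y z * Real.log (m3 z)) ≤ 0 := by
    refine le_trans (Finset.sum_le_sum fun x _ => Finset.sum_le_sum fun y _ =>
      Finset.sum_le_sum fun z _ => hpw x y z) hsumbound
  simp only [Finset.sum_sub_distrib, Finset.sum_add_distrib] at hfinal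
  linarith


end A3

lemma my_cmi_nonneg {Ω α β γ : Type*} [Fintype Ω] [Fintype α] [Fintype β] [Fintype γ]
    [DecidableEq α] [DecidableEq β] [DecidableEq γ]
    (p : Ω → ℝ) (hp : ∀ ω, 0 ≤ p ω) (X : Ω → α) (Y : Ω → β) (Z : Ω → γ) :
    0 ≤ cmi p X Y Z := by
  set q : α → β → γ → ℝ := fun x y z => pr p (fun ω => ((X ω, Y ω), Z ω)) ((x, y), z) with hq
  have hqn : ∀ x y z, 0 ≤ q x y z := fun x y z => my_pr_nonneg p hp _ _
  have e1 : ent p (fun ω => (X ω, Z ω)) = -∑ x, ∑ z, (∑ y, q x y z) * Real.log (∑ y, q x y z) := by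
    rw [ent, Fintype.sum_prod_type]
    congr 1
    exact Finset.sum_congr rfl fun x _ => Finset.sum_congr rfl fun z _ => by
      rw [my_pr_marg13 p X Y Z x z]
  have e2 : ent p (fun ω => (Y ω, Z ω)) = -∑ y, ∑ z, (∑ x, q x y z) * Real.log (∑ x, q x y z) := by
    rw [ent, Fintype.sum_prod_type]
    congr 1
    exact Finset.sum_congr rfl fun y _ => Finset.sum_congr rfl fun z _ => by
      rw [my_pr_marg23 p X Y Z y z]
  have e3 : ent p (fun ω => ((X ω, Y ω), Z ω))
      = -∑ x, ∑ y, ∑ z, q x y z * Real.log (q x y z) := by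
    rw [ent, Fintype.sum_prod_type, Fintype.sum_prod_type]
  have e4 : ent p Z = -∑ z, (∑ x, ∑ y, q x y z) * Real.log (∑ x, ∑ y, q x y z) := by
    rw [ent]
    congr 1
    exact Finset.sum_congr rfl fun z _ => by rw [my_pr_marg3 p X Y Z z]
  have := my_key_ineq q hqn
  rw [cmi, e1, e2, e3, e4]
  linarith

section A4
variable {Ω α β γ δ γ' : Type*} [Fintype Ω] [Fintype α] [Fintype β] [Fintype γ] [Fintype δ]
  [Fintype γ'] [DecidableEq α] [DecidableEq β] [DecidableEq γ] [DecidableEq δ] [DecidableEq γ']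

lemma my_cmi_symm (p : Ω → ℝ) (X : Ω → α) (Y : Ω → β) (Z : Ω → γ) :
    cmi p X Y Z = cmi p Y X Z := by
  simp only [cmi]
  rw [my_ent_congr p (fun ω => ((X ω, Y ω), Z ω)) (fun ω => ((Y ω, X ω), Z ω))
      (fun v => ((v.1.2, v.1.1), v.2))
      (by rintro ⟨⟨a, b⟩, c⟩ ⟨⟨d, e⟩, f⟩ h
          simp only [Prod.mk.injEq] at h ⊢
          tauto)
      (fun ω => rfl)]
  ring

lemma my_cmi_congr_right (p : Ω → ℝ) (X : Ω → α) (Y : Ω → β) (Z : Ω → γ) (Z' : Ω → γ')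
    (e : γ → γ') (he : Function.Injective e) (hZ : ∀ ω, Z' ω = e (Z ω)) :
    cmi p X Y Z' = cmi p X Y Z := by
  simp only [cmi]
  rw [my_ent_congr p (fun ω => (X ω, Z ω)) (fun ω => (X ω, Z' ω)) (Prod.map id e)
      (Function.Injective.prodMap Function.injective_id he) (fun ω => by simp [hZ ω]),
    my_ent_congr p (fun ω => (Y ω, Z ω)) (fun ω => (Y ω, Z' ω)) (Prod.map id e)
      (Function.Injective.prodMap Function.injective_id he) (fun ω => by simp [hZ ω]),
    my_ent_congr p (fun ω => ((X ω, Y ω), Z ω)) (fun ω => ((X ω, Y ω), Z' ω)) (Prod.map id e)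
      (Function.Injective.prodMap Function.injective_id he) (fun ω => by simp [hZ ω]),
    my_ent_congr p Z Z' e he hZ]

lemma my_cmi_step (p : Ω → ℝ) (hp : ∀ ω, 0 ≤ p ω)
    (X : Ω → α) (U : Ω → β) (Y : Ω → γ) (W : Ω → δ) :
    cmi p X Y W ≤ cmi p X U W + cmi p X Y (fun ω => (U ω, W ω)) := by
  have h0 := my_cmi_nonneg p hp X U (fun ω => (Y ω, W ω))
  have hid : cmi p X Y W + cmi p X U (fun ω => (Y ω, W ω))
      = cmi p X U W + cmi p X Y (fun ω => (U ω, W ω)) := by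
    simp only [cmi]
    have h1 : ent p (fun ω => (X ω, (Y ω, W ω))) = ent p (fun ω => ((X ω, Y ω), W ω)) :=
      my_ent_congr p _ _ (fun v => (v.1.1, (v.1.2, v.2)))
        (by rintro ⟨⟨a, b⟩, c⟩ ⟨⟨d, e⟩, f⟩ h
            simp only [Prod.mk.injEq] at h ⊢
            tauto)
        (fun ω => rfl)
    have h2 : ent p (fun ω => (U ω, (Y ω, W ω))) = ent p (fun ω => (Y ω, (U ω, W ω))) :=
      my_ent_congr p _ _ (fun v => (v.2.1, (v.1, v.2.2)))
        (by rintro ⟨a, ⟨b, c⟩⟩ ⟨d, ⟨e, f⟩⟩ h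
            simp only [Prod.mk.injEq] at h ⊢
            tauto)
        (fun ω => rfl)
    have h3 : ent p (fun ω => ((X ω, U ω), (Y ω, W ω))) =
        ent p (fun ω => ((X ω, Y ω), (U ω, W ω))) :=
      my_ent_congr p _ _ (fun v => ((v.1.1, v.2.1), (v.1.2, v.2.2)))
        (by rintro ⟨⟨a, b⟩, ⟨c, d⟩⟩ ⟨⟨e, f⟩, ⟨i, j⟩⟩ h
            simp only [Prod.mk.injEq] at h ⊢
            tauto)
        (fun ω => rfl)
    have h4 : ent p (fun ω => (X ω, (U ω, W ω))) = ent p (fun ω => ((X ω, U ω), W ω)) :=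
      my_ent_congr p _ _ (fun v => (v.1.1, (v.1.2, v.2)))
        (by rintro ⟨⟨a, b⟩, c⟩ ⟨⟨d, e⟩, f⟩ h
            simp only [Prod.mk.injEq] at h ⊢
            tauto)
        (fun ω => rfl)
    rw [h1, h2, h3, h4]
    ring
  linarith

lemma my_cmi_det (p : Ω → ℝ) (X : Ω → δ) (G : δ → β) (A : δ → γ) :
    cmi p (fun ω => G (X ω)) (fun ω => A (X ω)) X = 0 := by
  simp only [cmi]
  rw [my_ent_congr p X (fun ω => (G (X ω), X ω)) (fun v => (G v, v))
      (fun u v h => congrArg Prod.snd h) (fun ω => rfl),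
    my_ent_congr p X (fun ω => (A (X ω), X ω)) (fun v => (A v, v))
      (fun u v h => congrArg Prod.snd h) (fun ω => rfl),
    my_ent_congr p X (fun ω => ((G (X ω), A (X ω)), X ω)) (fun v => ((G v, A v), v))
      (fun u v h => congrArg Prod.snd h) (fun ω => rfl)]
  ring

lemma my_mi_eq_cmi_const (p : Ω → ℝ) (hsum : ∑ ω, p ω = 1)
    (g : Ω → β) (a : Ω → γ) (Z : Ω → (Fin 0 → α)) :
    mi p g a = cmi p g a Z := by
  have hZ : ∀ ω, Z ω = default := fun ω => Subsingleton.elim _ _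
  have entZ : ent p Z = 0 := by
    rw [ent, Fintype.sum_unique]
    have : pr p Z default = 1 := by
      unfold pr
      simp [hZ, hsum]
    rw [this]
    simp
  simp only [mi, cmi]
  rw [my_ent_congr p g (fun ω => (g ω, Z ω)) (fun b => (b, default))
      (fun u v h => congrArg Prod.fst h) (fun ω => by simp [hZ]),
    my_ent_congr p a (fun ω => (a ω, Z ω)) (fun b => (b, default))
      (fun u v h => congrArg Prod.fst h) (fun ω => by simp [hZ]),
    my_ent_congr p (fun ω => (g ω, a ω)) (fun ω => ((g ω, a ω), Z ω)) (fun b => (b, default))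
      (fun u v h => congrArg Prod.fst h) (fun ω => by simp [hZ]),
    entZ]
  ring

end A4

end MyAux

/-- limited-interventions debiasing theorem. -/
theorem stmt1 {Ω α β γ : Type*} [Fintype Ω] [Fintype α] [Fintype β] [Fintype γ]
    [DecidableEq α] [DecidableEq β] [DecidableEq γ]
    (p : Ω → ℝ) (hp : ∀ ω, 0 ≤ p ω) (hsum : ∑ ω, p ω = 1)
    (g : Ω → β) (a : Ω → γ) (T : ℕ) (x : ℕ → Ω → α)
    (G : (Fin T → α) → β) (hg : ∀ ω, g ω = G (pref x T ω))
    (A : (Fin T → α) → γ) (ha : ∀ ω, a ω = A (pref x T ω))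
    (hstep : ∀ t, 1 ≤ t → t ≤ T →
      cmi p g (x t) (pref x (t - 1)) = 0 ∨ cmi p a (x t) (pref x (t - 1)) = 0) :
    mi p g a = 0 := by
  have key : ∀ t, t ≤ T → cmi p g a (pref x 0) ≤ cmi p g a (pref x t) := by
    intro t
    induction t with
    | zero => exact fun _ => le_rfl
    | succ s ih =>
      intro hst
      refine le_trans (ih (by omega)) ?_
      have hpair : cmi p g a (fun ω => (x (s + 1) ω, pref x s ω)) = cmi p g a (pref x (s + 1)) := by
        refine my_cmi_congr_right p g a (pref x (s + 1)) _
          (fun v => (v (Fin.last s), fun i : Fin s => v i.castSucc)) ?_ ?_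
        · intro v w h
          have h1 := congrArg Prod.fst h
          have h2 := congrArg Prod.snd h
          simp only at h1 h2
          funext i
          cases i using Fin.lastCases with
          | last => exact h1
          | cast i => exact congrFun h2 i
        · intro ω
          simp only [pref, Fin.val_last, Fin.coe_castSucc]
          rfl
      rcases hstep (s + 1) (by omega) hst with h | h
      · have h' : cmi p g (x (s + 1)) (pref x s) = 0 := h
        calc cmi p g a (pref x s)
            ≤ cmi p g (x (s + 1)) (pref x s)
              + cmi p g a (fun ω => (x (s + 1) ω, pref x s ω)) :=
              my_cmi_step p hp g (x (s + 1)) a (pref x s)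
          _ = cmi p g a (pref x (s + 1)) := by rw [h', hpair]; ring
      · have h' : cmi p a (x (s + 1)) (pref x s) = 0 := h
        calc cmi p g a (pref x s)
            = cmi p a g (pref x s) := my_cmi_symm p g a (pref x s)
          _ ≤ cmi p a (x (s + 1)) (pref x s)
              + cmi p a g (fun ω => (x (s + 1) ω, pref x s ω)) :=
              my_cmi_step p hp a (x (s + 1)) g (pref x s)
          _ = cmi p g a (pref x (s + 1)) := by
              rw [h', my_cmi_symm p a g (fun ω => (x (s + 1) ω, pref x s ω)), hpair]
              ring
  have h0 : cmi p g a (pref x T) = 0 := by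
    have hg' : g = fun ω => G (pref x T ω) := funext hg
    have ha' : a = fun ω => A (pref x T ω) := funext ha
    rw [hg', ha']
    exact my_cmi_det p (pref x T) G A
  have h1 : mi p g a = cmi p g a (pref x 0) := my_mi_eq_cmi_const p hsum g a (pref x 0)
  have h2 : 0 ≤ cmi p g a (pref x 0) := my_cmi_nonneg p hp g a (pref x 0)
  have h3 := key T le_rfl
  linarith
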